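/- Let K and L be convex bodies in ℝⁿ containing the origin in their interiors such that {ρ_K(ξ), ρ_K(−ξ)} = {ρ_L(ξ), ρ_L(−ξ)} as unordered pairs for every unit vector ξ. Then for every k-dimensional linear subspace H (1 ≤ k ≤ n−1) and every i-dimensional subspace V ⊆ H (1 ≤ i ≤ k), the orthogonal projections satisfy vol_i((K ∩ H)|V) = vol_i((L ∩ H)|V). -/

import Mathlib

open Set MeasureTheory

/-- The radial function of a body `K`: `ρ_K(ξ) = sup {r > 0 : r • ξ ∈ K}`. -/
noncomputable def radial {n : ℕ} (K : Set (EuclideanSpace ℝ (Fin n)))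
    (ξ : EuclideanSpace ℝ (Fin n)) : ℝ :=
  sSup {r : ℝ | 0 < r ∧ r • ξ ∈ K}

/-- The (dim V)-dimensional volume of a subset `S` of a subspace `V`. -/
noncomputable def volIn {n : ℕ} (V : Submodule ℝ (EuclideanSpace ℝ (Fin n)))
    (S : Set (EuclideanSpace ℝ (Fin n))) : ENNReal :=
  volume ((Subtype.val ⁻¹' S) : Set V)

/-- The orthogonal projection `K|V` of a set `K` onto a subspace `V`. -/
noncomputable def projSet {n : ℕ} (V : Submodule ℝ (EuclideanSpace ℝ (Fin n)))
    (K : Set (EuclideanSpace ℝ (Fin n))) : Set (EuclideanSpace ℝ (Fin n)) :=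
  (fun y => ((V.orthogonalProjection y : V) : EuclideanSpace ℝ (Fin n))) '' K

section Aux

open scoped RealInnerProductSpace

variable {n : ℕ}

local notation "E" => EuclideanSpace ℝ (Fin n)

private lemma pair_max_min {a b c d : ℝ} (h : ({a, b} : Set ℝ) = {c, d}) :
    a ⊔ b = c ⊔ d ∧ a ⊓ b = c ⊓ d := by
  constructor
  · rw [← csSup_pair a b, ← csSup_pair c d, h]
  · rw [← csInf_pair a b, ← csInf_pair c d, h]

private lemma smul_mem_iff_le_radial {K : Set E} (hKc : IsCompact K) (hKv : Convex ℝ K)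
    (hK0 : (0 : E) ∈ interior K) {ξ : E} (hξ : ‖ξ‖ = 1) {r : ℝ} (hr : 0 < r) :
    r • ξ ∈ K ↔ r ≤ radial K ξ := by
  obtain ⟨ε, hε, hball⟩ := Metric.mem_nhds_iff.1 (mem_interior_iff_mem_nhds.1 hK0)
  have hhalf : (ε / 2) • ξ ∈ K := by
    apply hball
    simp only [Metric.mem_ball, dist_zero_right, norm_smul, hξ, mul_one, Real.norm_eq_abs]
    rw [abs_of_pos (by linarith)]
    linarith
  obtain ⟨R, hR⟩ := hKc.isBounded.subset_closedBall 0
  have hRnn : ∀ s : ℝ, 0 < s → s • ξ ∈ K → s ≤ R := by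
    intro s hs hsK
    have := hR hsK
    simp only [Metric.mem_closedBall, dist_zero_right, norm_smul, hξ, mul_one,
      Real.norm_eq_abs, abs_of_pos hs] at this
    exact this
  -- the truncated set
  set T : Set ℝ := {s : ℝ | s • ξ ∈ K} ∩ Ici (ε / 2) with hT
  have hTclosed : IsClosed T := by
    apply IsClosed.inter _ isClosed_Ici
    exact hKc.isClosed.preimage (by continuity)
  have hTmem : ε / 2 ∈ T := ⟨hhalf, mem_Ici.2 (le_refl _)⟩
  have hTne : T.Nonempty := ⟨ε / 2, hTmem⟩
  have hTbdd : BddAbove T := ⟨R, fun s hs => hRnn s (lt_of_lt_of_le (by linarith) hs.2) hs.1⟩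
  have hTsub : T ⊆ {r : ℝ | 0 < r ∧ r • ξ ∈ K} := fun s hs =>
    ⟨lt_of_lt_of_le (by linarith) hs.2, hs.1⟩
  have hsup_eq : radial K ξ = sSup T := by
    rw [radial]
    apply le_antisymm
    · apply csSup_le ⟨ε / 2, by exact ⟨by linarith, hhalf⟩⟩
      intro s hs
      rcases le_or_gt (ε / 2) s with h | h
      · exact le_csSup hTbdd ⟨hs.2, mem_Ici.2 h⟩
      · exact le_trans h.le (le_csSup hTbdd hTmem)
    · exact csSup_le_csSup ⟨R, fun s hs => hRnn s hs.1 hs.2⟩ hTne hTsub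
  have hmem : (radial K ξ) • ξ ∈ K := by
    rw [hsup_eq]
    exact (hTclosed.csSup_mem hTne hTbdd).1
  have hpos : 0 < radial K ξ := by
    rw [hsup_eq]
    exact lt_of_lt_of_le (by linarith : (0:ℝ) < ε / 2) (le_csSup hTbdd hTmem)
  constructor
  · intro hrK
    rw [radial]
    exact le_csSup ⟨R, fun s hs => hRnn s hs.1 hs.2⟩ ⟨hr, hrK⟩
  · intro hle
    have h0K : (0 : E) ∈ K := interior_subset hK0
    have : r • ξ = (r / radial K ξ) • ((radial K ξ) • ξ) := by
      rw [smul_smul, div_mul_cancel₀]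
      exact ne_of_gt hpos
    rw [this]
    exact hKv.smul_mem_of_zero_mem h0K hmem
      ⟨le_of_lt (div_pos hr hpos), by rw [div_le_one hpos]; exact hle⟩

private lemma mem_iff_norm_le_radial {K : Set E} (hKc : IsCompact K) (hKv : Convex ℝ K)
    (hK0 : (0 : E) ∈ interior K) {x : E} (hx : x ≠ 0) :
    x ∈ K ↔ ‖x‖ ≤ radial K (‖x‖⁻¹ • x) := by
  have hnx : (0:ℝ) < ‖x‖ := norm_pos_iff.2 hx
  have hξ : ‖‖x‖⁻¹ • x‖ = 1 := by
    rw [norm_smul, norm_inv, norm_norm, inv_mul_cancel₀ (ne_of_gt hnx)]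
  have hxx : ‖x‖ • (‖x‖⁻¹ • x) = x := by
    rw [smul_smul, mul_inv_cancel₀ (ne_of_gt hnx), one_smul]
  rw [← smul_mem_iff_le_radial hKc hKv hK0 hξ hnx, hxx]


private lemma union_neg_eq {K L : Set E}
    (hKc : IsCompact K) (hKv : Convex ℝ K) (hK0 : (0 : E) ∈ interior K)
    (hLc : IsCompact L) (hLv : Convex ℝ L) (hL0 : (0 : E) ∈ interior L)
    (h : ∀ ξ : E, ‖ξ‖ = 1 →
      ({radial K ξ, radial K (-ξ)} : Set ℝ) = {radial L ξ, radial L (-ξ)}) :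
    (K ∪ -K = L ∪ -L) ∧ (K ∩ -K = L ∩ -L) := by
  have main : ∀ x : E, ((x ∈ K ∪ -K ↔ x ∈ L ∪ -L) ∧ (x ∈ K ∩ -K ↔ x ∈ L ∩ -L)) := by
    intro x
    by_cases hx : x = 0
    · subst hx
      have h0K : (0:E) ∈ K := interior_subset hK0
      have h0L : (0:E) ∈ L := interior_subset hL0
      have h0K' : (0:E) ∈ -K := by rw [Set.mem_neg, neg_zero]; exact h0K
      have h0L' : (0:E) ∈ -L := by rw [Set.mem_neg, neg_zero]; exact h0L
      constructor <;> constructor <;> intro _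
      · exact Or.inl h0L
      · exact Or.inl h0K
      · exact ⟨h0L, h0L'⟩
      · exact ⟨h0K, h0K'⟩
    · set ξ := ‖x‖⁻¹ • x with hξdef
      have hnx : (0:ℝ) < ‖x‖ := norm_pos_iff.2 hx
      have hξ : ‖ξ‖ = 1 := by
        rw [hξdef, norm_smul, norm_inv, norm_norm, inv_mul_cancel₀ (ne_of_gt hnx)]
      have hmm := pair_max_min (h ξ hξ)
      have hKmem : x ∈ K ↔ ‖x‖ ≤ radial K ξ := mem_iff_norm_le_radial hKc hKv hK0 hx
      have hLmem : x ∈ L ↔ ‖x‖ ≤ radial L ξ := mem_iff_norm_le_radial hLc hLv hL0 hx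
      have hnegx : -x ≠ 0 := neg_ne_zero.2 hx
      have hKmem' : x ∈ -K ↔ ‖x‖ ≤ radial K (-ξ) := by
        rw [Set.mem_neg, mem_iff_norm_le_radial hKc hKv hK0 hnegx, norm_neg, smul_neg, ← hξdef]
      have hLmem' : x ∈ -L ↔ ‖x‖ ≤ radial L (-ξ) := by
        rw [Set.mem_neg, mem_iff_norm_le_radial hLc hLv hL0 hnegx, norm_neg, smul_neg, ← hξdef]
      constructor
      · rw [Set.mem_union, Set.mem_union, hKmem, hLmem, hKmem', hLmem',
          ← le_max_iff, ← le_max_iff, hmm.1]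
      · rw [Set.mem_inter_iff, Set.mem_inter_iff, hKmem, hLmem, hKmem', hLmem',
          ← le_min_iff, ← le_min_iff, hmm.2]
  exact ⟨Set.ext fun x => (main x).1, Set.ext fun x => (main x).2⟩

/-- The key connectedness lemma. -/
private lemma key_lemma {A B : Set E} (hAcl : IsClosed A) (hAv : Convex ℝ A) (hA0 : (0:E) ∈ A)
    (hBv : Convex ℝ B)
    (hU : A ∪ -A = B ∪ -B) (hI : A ∩ -A = B ∩ -B) {e : E} {t : ℝ} (ht : 0 < t)
    {a₁ a₂ : E} (ha₁A : a₁ ∈ A) (ha₂A : a₂ ∈ A)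
    (h₁ : t < ⟪a₁, e⟫) (h₂ : ⟪a₂, e⟫ < -t) :
    ∃ b ∈ B, ⟪b, e⟫ ≤ -t := by
  by_contra hcon
  push_neg at hcon
  -- construct x at level -t and y at level t, both in A
  have hs₁ : (0:ℝ) < ⟪a₁, e⟫ := lt_trans ht h₁
  have hs₂ : ⟪a₂, e⟫ < 0 := by linarith
  set lam₁ : ℝ := t / ⟪a₁, e⟫ with hlam₁
  set lam₂ : ℝ := t / (-⟪a₂, e⟫) with hlam₂
  have hlam₁01 : 0 ≤ lam₁ ∧ lam₁ ≤ 1 := by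
    constructor
    · exact le_of_lt (div_pos ht hs₁)
    · rw [hlam₁, div_le_one hs₁]; exact le_of_lt h₁
  have hlam₂01 : 0 ≤ lam₂ ∧ lam₂ ≤ 1 := by
    constructor
    · exact le_of_lt (div_pos ht (by linarith))
    · rw [hlam₂, div_le_one (by linarith)]; linarith
  set x : E := lam₂ • a₂ with hxdef
  set y : E := lam₁ • a₁ with hydef
  have hxA : x ∈ A := hAv.smul_mem_of_zero_mem hA0 ha₂A ⟨hlam₂01.1, hlam₂01.2⟩
  have hyA : y ∈ A := hAv.smul_mem_of_zero_mem hA0 ha₁A ⟨hlam₁01.1, hlam₁01.2⟩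
  have hne₂ : ⟪a₂, e⟫ ≠ 0 := ne_of_lt hs₂
  have hxe : ⟪x, e⟫ = -t := by
    rw [hxdef, real_inner_smul_left, hlam₂, div_mul_eq_mul_div, div_neg, mul_div_assoc,
      div_self hne₂, mul_one]
  have hye : ⟪y, e⟫ = t := by
    rw [hydef, real_inner_smul_left, hlam₁, div_mul_eq_mul_div, mul_div_assoc,
      div_self (ne_of_gt hs₁), mul_one]
  -- x ∈ -B, y ∈ B
  have hxB : -x ∈ B := by
    have : x ∈ B ∪ -B := hU ▸ Set.mem_union_left _ hxA
    rcases this with hB | hB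
    · exact absurd hxe (by have := hcon x hB; intro hh; rw [hh] at this; exact lt_irrefl _ this)
    · exact Set.mem_neg.1 hB
  have hyB : y ∈ B := by
    have : y ∈ B ∪ -B := hU ▸ Set.mem_union_left _ hyA
    rcases this with hB | hB
    · exact hB
    · exfalso
      have hmB : -y ∈ B := Set.mem_neg.1 hB
      have := hcon (-y) hmB
      rw [inner_neg_left, hye] at this
      exact lt_irrefl _ this
  -- the path q θ = (1-θ) • x + θ • (-y), staying at level -t
  set q : ℝ → E := fun θ => (1-θ) • x + θ • (-y) with hqdef
  have hq_cont : Continuous q := by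
    apply Continuous.add
    · exact (continuous_const.sub continuous_id).smul continuous_const
    · exact continuous_id.smul continuous_const
  have hq_lvl : ∀ θ : ℝ, ⟪q θ, e⟫ = -t := by
    intro θ
    rw [hqdef]
    simp only [inner_add_left, real_inner_smul_left, inner_neg_left, hxe, hye]
    ring
  have hq_negB : ∀ θ ∈ Icc (0:ℝ) 1, -(q θ) ∈ B := by
    intro θ hθ
    have : -(q θ) = (1-θ) • (-x) + θ • y := by rw [hqdef]; module
    rw [this]
    exact hBv hxB hyB (by linarith [hθ.1, hθ.2]) hθ.1 (by ring)
  have hq_mem : ∀ θ ∈ Icc (0:ℝ) 1, q θ ∈ A ∪ -A := by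
    intro θ hθ
    rw [hU]
    right
    rw [Set.mem_neg]
    exact hq_negB θ hθ
  have hq_notboth : ∀ θ ∈ Icc (0:ℝ) 1, ¬(q θ ∈ A ∧ q θ ∈ -A) := by
    intro θ hθ ⟨hqA, hqA'⟩
    have : q θ ∈ B ∩ -B := hI ▸ ⟨hqA, hqA'⟩
    have := hcon (q θ) this.1
    rw [hq_lvl θ] at this
    exact lt_irrefl _ this
  -- endpoints
  have hq0 : q 0 = x := by rw [hqdef]; simp
  have hq1 : q 1 = -y := by rw [hqdef]; simp
  have hx_notneg : x ∉ -A := by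
    intro hmem
    exact hq_notboth 0 ⟨le_refl _, zero_le_one⟩ (by rw [hq0]; exact ⟨hxA, hmem⟩)
  have hy_notA : -y ∉ A := by
    intro hmem
    have : -y ∈ -A := by rw [Set.mem_neg, neg_neg]; exact hyA
    exact hq_notboth 1 ⟨zero_le_one, le_refl _⟩ (by rw [hq1]; exact ⟨hmem, this⟩)
  -- connectedness contradiction
  have hnegA_closed : IsClosed (-A : Set E) := hAcl.neg
  have hopen1 : IsOpen (q ⁻¹' (-A : Set E)ᶜ) := (hnegA_closed.isOpen_compl).preimage hq_cont
  have hopen2 : IsOpen (q ⁻¹' (A : Set E)ᶜ) := (hAcl.isOpen_compl).preimage hq_cont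
  have hcover : Icc (0:ℝ) 1 ⊆ q ⁻¹' (-A : Set E)ᶜ ∪ q ⁻¹' (A : Set E)ᶜ := by
    intro θ hθ
    rcases hq_mem θ hθ with hA | hA'
    · by_cases hn : q θ ∈ -A
      · exact absurd ⟨hA, hn⟩ (hq_notboth θ hθ)
      · exact Or.inl hn
    · by_cases hn : q θ ∈ A
      · exact absurd ⟨hn, hA'⟩ (hq_notboth θ hθ)
      · exact Or.inr hn
  have hne1 : (Icc (0:ℝ) 1 ∩ q ⁻¹' (-A : Set E)ᶜ).Nonempty :=
    ⟨0, ⟨le_refl _, zero_le_one⟩, by rw [Set.mem_preimage, hq0]; exact hx_notneg⟩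
  have hne2 : (Icc (0:ℝ) 1 ∩ q ⁻¹' (A : Set E)ᶜ).Nonempty :=
    ⟨1, ⟨zero_le_one, le_refl _⟩, by rw [Set.mem_preimage, hq1]; exact hy_notA⟩
  obtain ⟨θ, hθI, hθ1, hθ2⟩ := isPreconnected_Icc _ _ hopen1 hopen2 hcover hne1 hne2
  rcases hq_mem θ hθI with hA | hA'
  · exact hθ2 hA
  · exact hθ1 hA'


private lemma projSet_neg (V : Submodule ℝ E) (S : Set E) :
    projSet V (-S) = -(projSet V S) := by
  ext z
  simp only [projSet, Set.mem_image, Set.mem_neg]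
  constructor
  · rintro ⟨w, hw, rfl⟩
    exact ⟨-w, hw, by rw [map_neg]; simp⟩
  · rintro ⟨w, hw, hwz⟩
    refine ⟨-w, by simpa using hw, ?_⟩
    rw [map_neg]
    simp only [Submodule.coe_neg, hwz, neg_neg]

private lemma projSet_union (V : Submodule ℝ E) (S T : Set E) :
    projSet V (S ∪ T) = projSet V S ∪ projSet V T :=
  Set.image_union _ _ _

/-- The projection cap lemma: under the union/intersection conditions,
`(A|V) ∩ -(A|V) ⊆ B|V`. -/
private lemma proj_cap_subset {A B : Set E} (V : Submodule ℝ E)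
    (hAcl : IsClosed A) (hAv : Convex ℝ A) (hA0 : (0:E) ∈ A)
    (hBc : IsCompact B) (hBv : Convex ℝ B) (hB0 : (0:E) ∈ B)
    (hU : A ∪ -A = B ∪ -B) (hI : A ∩ -A = B ∩ -B) :
    projSet V A ∩ -(projSet V A) ⊆ projSet V B := by
  intro y hy
  obtain ⟨hyP, hyP'⟩ := hy
  obtain ⟨a₁, ha₁A, ha₁⟩ := hyP
  obtain ⟨a₂, ha₂A, ha₂⟩ := Set.mem_neg.1 hyP'
  by_contra hyQ
  have hcont : Continuous (fun z : E => ((V.orthogonalProjection z : V) : E)) :=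
    continuous_subtype_val.comp (V.orthogonalProjection).continuous
  have hQc : IsCompact (projSet V B) := hBc.image hcont
  have hQconv : Convex ℝ (projSet V B) := by
    have : projSet V B = ⇑(V.subtype.comp (V.orthogonalProjection).toLinearMap) '' B := rfl
    rw [this]
    exact hBv.linear_image _
  obtain ⟨f, c, hfb, hfy⟩ := geometric_hahn_banach_closed_point hQconv hQc.isClosed hyQ
  set v : E := (InnerProductSpace.toDual ℝ E).symm f with hvdef
  have hv : ∀ z : E, ⟪v, z⟫ = f z := fun z => InnerProductSpace.toDual_symm_apply
  set u : E := ((V.orthogonalProjection v : V) : E) with hudef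
  have hadj : ∀ z : E, ⟪u, z⟫ = f ((V.orthogonalProjection z : V) : E) := by
    intro z
    rw [hudef, ← V.starProjection_apply, V.inner_starProjection_left_eq_right, V.starProjection_apply, hv]
  have hBlt : ∀ b ∈ B, ⟪u, b⟫ < c := by
    intro b hb
    rw [hadj]
    exact hfb _ ⟨b, hb, rfl⟩
  have hcpos : 0 < c := by
    have h0Q : (0:E) ∈ projSet V B := ⟨0, hB0, by simp⟩
    have := hfb 0 h0Q
    rwa [map_zero] at this
  have ha₁' : ((V.orthogonalProjection a₁ : V) : E) = y := ha₁
  have ha₂' : ((V.orthogonalProjection a₂ : V) : E) = -y := ha₂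
  have hfy1 : f y = ⟪u, a₁⟫ := by rw [hadj a₁, ha₁']
  have hfy2 : ⟪u, a₂⟫ = -(f y) := by
    rw [hadj a₂, ha₂', map_neg]
  -- apply the key lemma with direction -u and threshold c
  have h₁' : c < ⟪a₂, -u⟫ := by
    rw [inner_neg_right, real_inner_comm, hfy2, neg_neg]
    exact hfy
  have h₂' : ⟪a₁, -u⟫ < -c := by
    rw [inner_neg_right, real_inner_comm, ← hfy1]
    linarith
  obtain ⟨b, hbB, hble⟩ := key_lemma hAcl hAv hA0 hBv hU hI hcpos ha₂A ha₁A h₁' h₂'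
  rw [inner_neg_right] at hble
  have : c ≤ ⟪b, u⟫ := by linarith
  rw [real_inner_comm] at this
  exact absurd (hBlt b hbB) (not_lt.2 this)

end Aux


theorem radial_pairs_eq_imp_section_proj_volumes_eq {n : ℕ}
    (K L : Set (EuclideanSpace ℝ (Fin n)))
    (hKc : IsCompact K) (hKv : Convex ℝ K)
    (hK0 : (0 : EuclideanSpace ℝ (Fin n)) ∈ interior K)
    (hLc : IsCompact L) (hLv : Convex ℝ L)
    (hL0 : (0 : EuclideanSpace ℝ (Fin n)) ∈ interior L)
    (h : ∀ ξ : EuclideanSpace ℝ (Fin n), ‖ξ‖ = 1 →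
      ({radial K ξ, radial K (-ξ)} : Set ℝ) = {radial L ξ, radial L (-ξ)}) :
    ∀ (i k : ℕ), 1 ≤ i → i ≤ k → k ≤ n - 1 →
      ∀ H V : Submodule ℝ (EuclideanSpace ℝ (Fin n)),
        Module.finrank ℝ H = k → Module.finrank ℝ V = i → V ≤ H →
        volIn V (projSet V (K ∩ (H : Set (EuclideanSpace ℝ (Fin n))))) =
          volIn V (projSet V (L ∩ (H : Set (EuclideanSpace ℝ (Fin n))))) := by
  intro i k _ _ _ H V _ _ _
  obtain ⟨hU0, hI0⟩ := union_neg_eq hKc hKv hK0 hLc hLv hL0 h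
  set A : Set (EuclideanSpace ℝ (Fin n)) := K ∩ (H : Set (EuclideanSpace ℝ (Fin n))) with hAdef
  set B : Set (EuclideanSpace ℝ (Fin n)) := L ∩ (H : Set (EuclideanSpace ℝ (Fin n))) with hBdef
  -- basic properties of sections
  have hHcl : IsClosed (H : Set (EuclideanSpace ℝ (Fin n))) := H.closed_of_finiteDimensional
  have hAc : IsCompact A := hKc.inter_right hHcl
  have hBc : IsCompact B := hLc.inter_right hHcl
  have hAv : Convex ℝ A := hKv.inter H.convex
  have hBv : Convex ℝ B := hLv.inter H.convex
  have hA0 : (0 : EuclideanSpace ℝ (Fin n)) ∈ A := ⟨interior_subset hK0, H.zero_mem⟩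
  have hB0 : (0 : EuclideanSpace ℝ (Fin n)) ∈ B := ⟨interior_subset hL0, H.zero_mem⟩
  -- negation distributes over sections
  have hnegH : ∀ S : Set (EuclideanSpace ℝ (Fin n)),
      -(S ∩ (H : Set (EuclideanSpace ℝ (Fin n)))) =
        (-S) ∩ (H : Set (EuclideanSpace ℝ (Fin n))) := by
    intro S
    ext z
    simp only [Set.mem_neg, Set.mem_inter_iff, SetLike.mem_coe]
    exact and_congr_right fun _ => ⟨fun hz => by simpa using H.neg_mem hz, fun hz => H.neg_mem hz⟩
  have hUA : A ∪ -A = B ∪ -B := by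
    rw [hAdef, hBdef, hnegH K, hnegH L, ← Set.union_inter_distrib_right,
      ← Set.union_inter_distrib_right, hU0]
  have hIA : A ∩ -A = B ∩ -B := by
    rw [hAdef, hBdef, hnegH K, hnegH L, Set.inter_inter_inter_comm, Set.inter_self,
      Set.inter_inter_inter_comm, Set.inter_self, hI0]
  -- projections
  set P : Set (EuclideanSpace ℝ (Fin n)) := projSet V A with hPdef
  set Q : Set (EuclideanSpace ℝ (Fin n)) := projSet V B with hQdef
  have hPQu : P ∪ -P = Q ∪ -Q := by
    calc P ∪ -P = projSet V (A ∪ -A) := by rw [projSet_union, projSet_neg, hPdef]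
      _ = projSet V (B ∪ -B) := by rw [hUA]
      _ = Q ∪ -Q := by rw [projSet_union, projSet_neg, hQdef]
  have capPQ : P ∩ -P ⊆ Q :=
    proj_cap_subset V hAc.isClosed hAv hA0 hBc hBv hB0 hUA hIA
  have capQP : Q ∩ -Q ⊆ P :=
    proj_cap_subset V hBc.isClosed hBv hB0 hAc hAv hA0 hUA.symm hIA.symm
  have hPQi : P ∩ -P = Q ∩ -Q := by
    apply Set.Subset.antisymm
    · intro z hz
      refine ⟨capPQ hz, ?_⟩
      have hz' : -z ∈ P ∩ -P :=
        ⟨Set.mem_neg.1 hz.2, Set.mem_neg.2 (by rw [neg_neg]; exact hz.1)⟩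
      rw [Set.mem_neg]
      exact capPQ hz'
    · intro z hz
      refine ⟨capQP hz, ?_⟩
      have hz' : -z ∈ Q ∩ -Q :=
        ⟨Set.mem_neg.1 hz.2, Set.mem_neg.2 (by rw [neg_neg]; exact hz.1)⟩
      rw [Set.mem_neg]
      exact capQP hz'
  -- pass to the subspace V and compute volumes
  set S₁ : Set V := Subtype.val ⁻¹' P with hS₁def
  set S₂ : Set V := Subtype.val ⁻¹' Q with hS₂def
  have hpre_neg : ∀ T : Set (EuclideanSpace ℝ (Fin n)),
      (Subtype.val ⁻¹' (-T) : Set V) = -(Subtype.val ⁻¹' T) := by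
    intro T
    ext w
    simp [Set.mem_neg]
  -- compactness of the preimages
  have hpre_img : ∀ C : Set (EuclideanSpace ℝ (Fin n)),
      (Subtype.val ⁻¹' (projSet V C) : Set V) = (V.orthogonalProjection) '' C := by
    intro C
    ext w
    constructor
    · rintro hw
      obtain ⟨a, haC, ha⟩ := hw
      exact ⟨a, haC, Subtype.val_injective ha⟩
    · rintro ⟨a, haC, ha⟩
      exact ⟨a, haC, congrArg Subtype.val ha⟩
  have hS₁c : IsCompact S₁ := by
    rw [hS₁def, hPdef, hpre_img]
    exact hAc.image (V.orthogonalProjection).continuous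
  have hS₂c : IsCompact S₂ := by
    rw [hS₂def, hQdef, hpre_img]
    exact hBc.image (V.orthogonalProjection).continuous
  have hS₁m : MeasurableSet S₁ := hS₁c.isClosed.measurableSet
  have hS₂m : MeasurableSet S₂ := hS₂c.isClosed.measurableSet
  have hnS₁m : MeasurableSet (-S₁) := hS₁m.neg
  have hnS₂m : MeasurableSet (-S₂) := hS₂m.neg
  -- set equalities in V
  have hVu : S₁ ∪ -S₁ = S₂ ∪ -S₂ := by
    rw [hS₁def, hS₂def, ← hpre_neg, ← hpre_neg, ← Set.preimage_union, ← Set.preimage_union, hPQu]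
  have hVi : S₁ ∩ -S₁ = S₂ ∩ -S₂ := by
    rw [hS₁def, hS₂def, ← hpre_neg, ← hpre_neg, ← Set.preimage_inter, ← Set.preimage_inter, hPQi]
  -- volumes
  have hie₁ : volume (S₁ ∪ -S₁) + volume (S₁ ∩ -S₁) = volume S₁ + volume (-S₁) :=
    measure_union_add_inter S₁ hnS₁m
  have hie₂ : volume (S₂ ∪ -S₂) + volume (S₂ ∩ -S₂) = volume S₂ + volume (-S₂) :=
    measure_union_add_inter S₂ hnS₂m
  have hneg₁ : volume (-S₁) = volume S₁ := Measure.measure_neg volume S₁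
  have hneg₂ : volume (-S₂) = volume S₂ := Measure.measure_neg volume S₂
  have hsum : volume S₁ + volume S₁ = volume S₂ + volume S₂ := by
    calc volume S₁ + volume S₁ = volume S₁ + volume (-S₁) := by rw [hneg₁]
      _ = volume (S₁ ∪ -S₁) + volume (S₁ ∩ -S₁) := hie₁.symm
      _ = volume (S₂ ∪ -S₂) + volume (S₂ ∩ -S₂) := by rw [hVu, hVi]
      _ = volume S₂ + volume (-S₂) := hie₂
      _ = volume S₂ + volume S₂ := by rw [hneg₂]
  have hfin₁ : volume S₁ ≠ ⊤ := hS₁c.measure_lt_top.ne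
  have hfin₂ : volume S₂ ≠ ⊤ := hS₂c.measure_lt_top.ne
  have hvol : volume S₁ = volume S₂ := by
    have h' := congrArg ENNReal.toReal hsum
    rw [ENNReal.toReal_add hfin₁ hfin₁, ENNReal.toReal_add hfin₂ hfin₂] at h'
    have : (volume S₁).toReal = (volume S₂).toReal := by linarith
    exact (ENNReal.toReal_eq_toReal_iff' hfin₁ hfin₂).1 this
  exact hvol
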